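/- Let y be a minimal integral vector in the supermodular polyhedron Q = {y ∈ ℤ^S : y(X) ≥ p(X) for all X ⊆ S} subject to y ≥ x for a given integral vector x ∉ B ∩ ℤ^S with x(S) = p(S), and let S₊ be the largest y-tight set (i.e., largest X with y(X) = p(X)). Then ∅ ≠ S₊ ≠ S, and y(s) = x(s) for every s ∈ S − S₊. -/

import Mathlib

open Finset

variable {α : Type*} [Fintype α] [DecidableEq α]

def Supermodular (p : Finset α → EReal) : Prop :=
  ∀ X Y : Finset α, p X + p Y ≤ p (X ∩ Y) + p (X ∪ Y)

/-- `p` takes values in `ℤ ∪ {−∞}`. -/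
def IntegerValued (p : Finset α → EReal) : Prop :=
  ∀ X : Finset α, p X = ⊥ ∨ ∃ n : ℤ, p X = ((n : ℝ) : EReal)

/-- `x` belongs to the base-polyhedron `B'(p)`:
`x(S) = p(S)` and `x(Z) ≥ p(Z)` for every `Z ⊆ S`. -/
def memB (p : Finset α → EReal) (x : α → ℝ) : Prop :=
  ((∑ s, x s : ℝ) : EReal) = p Finset.univ ∧
    ∀ Z : Finset α, p Z ≤ ((∑ s ∈ Z, x s : ℝ) : EReal)

/-- `x` is an integral element of the base-polyhedron `B'(p)` (a member of the
M-convex set `B ∩ ℤ^S`). -/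
def memBZ (p : Finset α → EReal) (x : α → ℤ) : Prop :=
  ((((∑ s, x s : ℤ) : ℝ)) : EReal) = p Finset.univ ∧
    ∀ Z : Finset α, p Z ≤ ((((∑ s ∈ Z, x s : ℤ) : ℝ)) : EReal)

/-- Lexicographic comparison `l1 ≤_lex l2` of lists. -/
def lexLE {β : Type*} [LT β] (l1 l2 : List β) : Prop :=
  l1 = l2 ∨ List.Lex (· < ·) l1 l2

/-- The components of `x` sorted in decreasing order. -/
noncomputable def sortDescR (x : α → ℝ) : List ℝ :=
  (Multiset.sort (Finset.univ.val.map x) (· ≤ ·)).reverse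

/-- The components of the integral vector `x` sorted in decreasing order. -/
def sortDescZ (x : α → ℤ) : List ℤ :=
  (Multiset.sort (Finset.univ.val.map x) (· ≤ ·)).reverse

/-- `m` is a decreasingly minimal element of the base-polyhedron `B'(p)`. -/
def DecMinR (p : Finset α → EReal) (m : α → ℝ) : Prop :=
  memB p m ∧ ∀ y : α → ℝ, memB p y → lexLE (sortDescR m) (sortDescR y)

/-- `m` is a decreasingly minimal element of the M-convex set `B'(p) ∩ ℤ^S`. -/
def DecMinZ (p : Finset α → EReal) (m : α → ℤ) : Prop :=
  memBZ p m ∧ ∀ y : α → ℤ, memBZ p y → lexLE (sortDescZ m) (sortDescZ y)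

/-- If `y` is a componentwise-minimal integral element of the supermodular polyhedron
`Q = {y : y(X) ≥ p(X) ∀X}` above a vector `x ∉ B ∩ ℤ^S` with `x(S) = p(S)`, and
`S₊` is the largest `y`-tight set, then `∅ ≠ S₊ ≠ S` and `y = x` outside `S₊`. -/
theorem largest_tight_set_properties (p : Finset α → EReal) (hp0 : p ∅ = 0)
    (hsup : Supermodular p) (hint : IntegerValued p)
    (pS : ℤ) (hpS : p (Finset.univ : Finset α) = ((pS : ℝ) : EReal))
    (x : α → ℤ) (hxS : (∑ s, x s) = pS) (hxB : ¬ memBZ p x)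
    (y : α → ℤ)
    (hyQ : ∀ X : Finset α, p X ≤ ((((∑ s ∈ X, y s : ℤ) : ℝ)) : EReal))
    (hyx : ∀ s, x s ≤ y s)
    (hymin : ∀ y' : α → ℤ,
      (∀ X : Finset α, p X ≤ ((((∑ s ∈ X, y' s : ℤ) : ℝ)) : EReal)) →
      (∀ s, x s ≤ y' s) → (∀ s, y' s ≤ y s) → y' = y)
    (Splus : Finset α)
    (htight : p Splus = ((((∑ s ∈ Splus, y s : ℤ) : ℝ)) : EReal))
    (hlargest : ∀ X : Finset α,
      p X = ((((∑ s ∈ X, y s : ℤ) : ℝ)) : EReal) → X ⊆ Splus) :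
    Splus ≠ ∅ ∧ Splus ≠ Finset.univ ∧ ∀ s ∈ Finset.univ \ Splus, y s = x s := by
  -- key lemma: any coordinate where y exceeds x lies in a tight set
  have key : ∀ s : α, x s < y s → s ∈ Splus := by
    intro s hs
    set y' : α → ℤ := fun t => if t = s then y s - 1 else y t with hy'
    have hy's : y' s = y s - 1 := by simp [hy']
    have hne : y' ≠ y := by
      intro h
      have := congrFun h s
      rw [hy's] at this
      omega
    have hge : ∀ t, x t ≤ y' t := by
      intro t
      by_cases h : t = s
      · subst h; rw [hy's]; omega
      · simp only [hy', if_neg h]; exact hyx t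
    have hle : ∀ t, y' t ≤ y t := by
      intro t
      by_cases h : t = s
      · subst h; rw [hy's]; omega
      · simp [hy', h]
    have hnotQ : ¬ ∀ X : Finset α, p X ≤ ((((∑ t ∈ X, y' t : ℤ) : ℝ)) : EReal) := by
      intro h
      exact hne (hymin y' h hge hle)
    push_neg at hnotQ
    obtain ⟨X, hX⟩ := hnotQ
    have hsX : s ∈ X := by
      by_contra hsX
      have hsum : ∑ t ∈ X, y' t = ∑ t ∈ X, y t := by
        apply Finset.sum_congr rfl
        intro t ht
        have : t ≠ s := fun h => hsX (h ▸ ht)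
        simp [hy', this]
      rw [hsum] at hX
      exact absurd hX (not_lt.mpr (hyQ X))
    have hsum : ∑ t ∈ X, y' t = (∑ t ∈ X, y t) - 1 := by
      have h1 : ∑ t ∈ X.erase s, y' t + y' s = ∑ t ∈ X, y' t :=
        Finset.sum_erase_add X y' hsX
      have h2 : ∑ t ∈ X.erase s, y t + y s = ∑ t ∈ X, y t :=
        Finset.sum_erase_add X y hsX
      have h3 : ∑ t ∈ X.erase s, y' t = ∑ t ∈ X.erase s, y t := by
        apply Finset.sum_congr rfl
        intro t ht
        have : t ≠ s := Finset.ne_of_mem_erase ht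
        simp [hy', this]
      rw [← h1, h3, hy's]
      omega
    rw [hsum] at hX
    -- p X > y(X) - 1 and p X ≤ y(X), p X integer ⇒ p X = y(X)
    have hlt : ((((∑ t ∈ X, y t) - 1 : ℤ) : ℝ) : EReal) < p X := hX
    have hub : p X ≤ ((((∑ t ∈ X, y t : ℤ) : ℝ)) : EReal) := hyQ X
    rcases hint X with hbot | ⟨n, hn⟩
    · rw [hbot] at hlt
      exact absurd hlt (by simp)
    · rw [hn] at hlt hub
      have h1 : ((((∑ t ∈ X, y t) - 1 : ℤ) : ℝ)) < (n : ℝ) := by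
        exact_mod_cast hlt
      have h2 : (n : ℝ) ≤ (((∑ t ∈ X, y t : ℤ) : ℝ)) := by
        exact_mod_cast hub
      have h1' : (∑ t ∈ X, y t) - 1 < n := by exact_mod_cast h1
      have h2' : n ≤ ∑ t ∈ X, y t := by exact_mod_cast h2
      have : n = ∑ t ∈ X, y t := by omega
      have hXt : p X = ((((∑ t ∈ X, y t : ℤ) : ℝ)) : EReal) := by
        rw [hn, this]
      exact (hlargest X hXt) hsX
  -- x is not in Q
  have hxQ : ∃ Z : Finset α, ¬ p Z ≤ ((((∑ s ∈ Z, x s : ℤ) : ℝ)) : EReal) := by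
    by_contra h
    push_neg at h
    exact hxB ⟨by rw [hxS, hpS], h⟩
  obtain ⟨Z, hZ⟩ := hxQ
  have hZlt : (∑ s ∈ Z, x s) < ∑ s ∈ Z, y s := by
    by_contra h
    push_neg at h
    have hle : (∑ s ∈ Z, y s) = ∑ s ∈ Z, x s :=
      le_antisymm h (Finset.sum_le_sum fun s _ => hyx s)
    rw [← hle] at hZ
    exact hZ (hyQ Z)
  have hex : ∃ s ∈ Z, x s < y s := by
    by_contra h
    push_neg at h
    have : (∑ s ∈ Z, y s) ≤ ∑ s ∈ Z, x s :=
      Finset.sum_le_sum fun s hs => h s hs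
    omega
  obtain ⟨s₀, _, hs₀⟩ := hex
  refine ⟨?_, ?_, ?_⟩
  · intro h
    rw [h] at key
    exact absurd (key s₀ hs₀) (Finset.notMem_empty s₀)
  · intro h
    rw [h] at htight
    rw [hpS] at htight
    have h1 : (pS : ℝ) = (((∑ s, y s : ℤ) : ℝ)) := by exact_mod_cast htight
    have h2 : pS = ∑ s, y s := by exact_mod_cast h1
    have hsum : (∑ s, x s) = ∑ s, y s := by rw [hxS, h2]
    have hxy : x = y := by
      funext t
      by_contra hne
      have hlt : x t < y t := lt_of_le_of_ne (hyx t) hne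
      have : (∑ s, x s) < ∑ s, y s := by
        apply Finset.sum_lt_sum (fun s _ => hyx s) ⟨t, Finset.mem_univ t, hlt⟩
      omega
    apply hxB
    constructor
    · rw [hxS, hpS]
    · intro W
      rw [hxy]
      exact hyQ W
  · intro s hs
    rw [Finset.mem_sdiff] at hs
    by_contra hne
    have : x s < y s := lt_of_le_of_ne (hyx s) (fun h => hne h.symm)
    exact hs.2 (key s this)
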